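/- Let O be a CM order and a ∈ O. Then tr(a·ā) ≥ r, where r is the ℤ-rank of the ideal a·ā·O (equivalently, the dimension over ℚ of the span of a·ā·O in ℚ ⊗ O). -/

import Mathlib

open Matrix

/-- The trace of the multiplication-by-`a` endomorphism of the order `O`. -/
noncomputable def trform {O : Type*} [CommRing O] (a : O) : ℤ :=
  LinearMap.trace ℤ O (LinearMap.mulLeft ℤ a)

private noncomputable def TL (O : Type*) [CommRing O] : O →ₗ[ℤ] ℤ :=
  (LinearMap.trace ℤ O).comp (LinearMap.mul ℤ O)

private lemma TL_apply {O : Type*} [CommRing O] (x : O) : TL O x = trform x := by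
  have h : (LinearMap.mul ℤ O) x = LinearMap.mulLeft ℤ x := by
    ext y; simp [LinearMap.mul_apply']
  simp [TL, trform, h]

private lemma trform_zero {O : Type*} [CommRing O] : trform (0 : O) = 0 := by
  rw [← TL_apply]; exact map_zero _

private lemma trf_sum_left {O : Type*} [CommRing O] {ι : Type*} [Fintype ι]
    (w : ι → ℤ) (e : ι → O) (y : O) :
    trform ((∑ i, w i • e i) * y) = ∑ i, w i * trform (e i * y) := by
  rw [← TL_apply, Finset.sum_mul, map_sum]
  refine Finset.sum_congr rfl fun i _ => ?_
  rw [smul_mul_assoc, map_zsmul, smul_eq_mul, TL_apply]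

private lemma trf_sum_right {O : Type*} [CommRing O] {ι : Type*} [Fintype ι]
    (v : ι → ℤ) (e : ι → O) (x : O) :
    trform (x * (∑ j, v j • e j)) = ∑ j, v j * trform (x * e j) := by
  rw [← TL_apply, Finset.mul_sum, map_sum]
  refine Finset.sum_congr rfl fun j _ => ?_
  rw [mul_smul_comm, map_zsmul, smul_eq_mul, TL_apply]

private lemma trform_sigma {O : Type*} [CommRing O] (σ : O ≃+* O) (z : O) :
    trform (σ z) = trform z := by
  set ε : O ≃ₗ[ℤ] O := σ.toAddEquiv.toIntLinearEquiv with hε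
  have hconj : LinearMap.mulLeft ℤ (σ z) = ε.conj (LinearMap.mulLeft ℤ z) := by
    ext x
    simp only [LinearMap.mulLeft_apply, LinearEquiv.conj_apply, LinearMap.comp_apply,
      LinearEquiv.coe_coe]
    show σ z * x = σ (z * ε.symm x)
    rw [_root_.map_mul]
    congr 1
    show _ = σ (σ.symm x)
    rw [RingEquiv.apply_symm_apply]
  rw [trform, hconj, LinearMap.trace_conj', trform]

private lemma rat_clear (q : ℚ) {d : ℤ} (hd : (q.den : ℤ) ∣ d) : ∃ z : ℤ, (z : ℚ) = d * q := by
  obtain ⟨k, hk⟩ := hd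
  refine ⟨q.num * k, ?_⟩
  have hden : ((q.den : ℚ)) ≠ 0 := by positivity
  have hq : (q.num : ℚ) = q * q.den := by
    have h := Rat.num_div_den q
    rw [div_eq_iff hden] at h
    exact h
  push_cast
  rw [hq, hk]; push_cast; ring

private lemma int_quad_nonneg_rat {ι : Type*} [Fintype ι] (M : Matrix ι ι ℤ)
    (h : ∀ w : ι → ℤ, 0 ≤ w ⬝ᵥ M.mulVec w) (v : ι → ℚ) :
    0 ≤ v ⬝ᵥ (M.map (Int.cast : ℤ → ℚ)).mulVec v := by
  classical
  set d : ℤ := ∏ i, ((v i).den : ℤ) with hd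
  have hdpos : 0 < d := Finset.prod_pos (fun i _ => by positivity)
  have hdvd : ∀ i, ((v i).den : ℤ) ∣ d := fun i => Finset.dvd_prod_of_mem _ (Finset.mem_univ i)
  choose w hw using fun i => rat_clear (v i) (hdvd i)
  have hwv : ((Int.cast : ℤ → ℚ) ∘ w) = (d : ℚ) • v := by
    funext i; simp [Function.comp, hw i, Pi.smul_apply, smul_eq_mul]
  have key : ((w ⬝ᵥ M.mulVec w : ℤ) : ℚ)
      = (d : ℚ) * ((d : ℚ) * (v ⬝ᵥ (M.map (Int.cast : ℤ → ℚ)).mulVec v)) := by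
    have e1 : ((w ⬝ᵥ M.mulVec w : ℤ) : ℚ)
        = ((Int.cast : ℤ → ℚ) ∘ w) ⬝ᵥ ((Int.cast : ℤ → ℚ) ∘ (M.mulVec w)) :=
      (Int.castRingHom ℚ).map_dotProduct w (M.mulVec w)
    have e2 : ((Int.cast : ℤ → ℚ) ∘ (M.mulVec w))
        = (M.map (Int.cast : ℤ → ℚ)).mulVec ((Int.cast : ℤ → ℚ) ∘ w) := by
      funext i; exact (Int.castRingHom ℚ).map_mulVec M w i
    rw [e1, e2, hwv, Matrix.mulVec_smul, smul_dotProduct, dotProduct_smul, smul_eq_mul, smul_eq_mul]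
  have hnn : (0:ℚ) ≤ ((w ⬝ᵥ M.mulVec w : ℤ) : ℚ) := by exact_mod_cast h w
  rw [key] at hnn
  have hd2 : (0:ℚ) < (d:ℚ) := by exact_mod_cast hdpos
  rw [← mul_assoc] at hnn
  exact (mul_nonneg_iff_of_pos_left (mul_pos hd2 hd2)).mp hnn

private lemma int_psd_real {ι : Type*} [Fintype ι] [DecidableEq ι] (M : Matrix ι ι ℤ)
    (hsym : Mᵀ = M) (h : ∀ w : ι → ℤ, 0 ≤ w ⬝ᵥ M.mulVec w) :
    (M.map (Int.cast : ℤ → ℝ)).PosSemidef := by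
  rw [Matrix.posSemidef_iff_dotProduct_mulVec]
  constructor
  · rw [Matrix.IsHermitian, conjTranspose_eq_transpose_of_trivial, ← Matrix.transpose_map, hsym]
  · intro x
    have hstar : star x = x := by funext i; simp
    rw [hstar]
    set q : (ι → ℝ) → ℝ := fun v => v ⬝ᵥ (M.map (Int.cast : ℤ → ℝ)).mulVec v with hqdef
    have hq : Continuous q :=
      continuous_id.dotProduct (continuous_const.matrix_mulVec continuous_id)
    have hclosed : IsClosed {v : ι → ℝ | 0 ≤ q v} := isClosed_le continuous_const hq
    have hsub : (Set.univ.pi fun _ : ι => Set.range ((↑) : ℚ → ℝ)) ⊆ {v | 0 ≤ q v} := by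
      intro u hu
      choose vq hvq using fun i => hu i (Set.mem_univ i)
      have hu' : u = fun i => ((vq i : ℝ)) := funext fun i => (hvq i).symm
      rw [Set.mem_setOf_eq, hu']
      have h0 := int_quad_nonneg_rat M h vq
      have hcast : q (fun i => ((vq i : ℝ)))
          = ((vq ⬝ᵥ (M.map (Int.cast : ℤ → ℚ)).mulVec vq : ℚ) : ℝ) := by
        have e1 : ((vq ⬝ᵥ (M.map (Int.cast : ℤ → ℚ)).mulVec vq : ℚ) : ℝ)
            = ((Rat.cast : ℚ → ℝ) ∘ vq) ⬝ᵥ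
              ((Rat.cast : ℚ → ℝ) ∘ ((M.map (Int.cast : ℤ → ℚ)).mulVec vq)) :=
          (Rat.castHom ℝ).map_dotProduct vq _
        have e2 : ((Rat.cast : ℚ → ℝ) ∘ ((M.map (Int.cast : ℤ → ℚ)).mulVec vq))
            = ((M.map (Int.cast : ℤ → ℚ)).map (Rat.cast : ℚ → ℝ)).mulVec
              ((Rat.cast : ℚ → ℝ) ∘ vq) := by
          funext i; exact (Rat.castHom ℝ).map_mulVec _ vq i
        rw [e1, e2, Matrix.map_map]
        have e3 : ((Rat.cast : ℚ → ℝ) ∘ (Int.cast : ℤ → ℚ)) = (Int.cast : ℤ → ℝ) := by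
          funext z; simp
        rw [e3]
        rfl
      rw [hcast]
      exact_mod_cast h0
    have hdense : Dense (Set.univ.pi fun _ : ι => Set.range ((↑) : ℚ → ℝ)) :=
      dense_pi Set.univ fun i _ => Rat.denseRange_cast
    have huniv : {v : ι → ℝ | 0 ≤ q v} = Set.univ := by
      have hd2 : Dense {v : ι → ℝ | 0 ≤ q v} := hdense.mono hsub
      rw [← hclosed.closure_eq]; exact hd2.closure_eq
    exact (huniv ▸ Set.mem_univ x : x ∈ {v : ι → ℝ | 0 ≤ q v})

set_option maxHeartbeats 2000000 in
/-- In a CM order, `tr (a * σ a)` is at least the `ℤ`-rank of the ideal `(a * σ a)`. -/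
theorem cm_order_trace_ge_rank {O : Type*} [CommRing O]
    [Module.Free ℤ O] [Module.Finite ℤ O]
    (σ : O ≃+* O) (hσ : ∀ x : O, σ (σ x) = x)
    (hpos : ∀ x : O, x ≠ 0 → 0 < trform (x * σ x))
    (a : O) :
    (Module.finrank ℤ
        (Submodule.restrictScalars ℤ (Ideal.span ({a * σ a} : Set O))) : ℤ)
      ≤ trform (a * σ a) := by
  classical
  set b : O := a * σ a with hbdef
  have hσb : σ b = b := by rw [hbdef, _root_.map_mul, hσ, mul_comm]
  set L : Submodule ℤ O := Submodule.restrictScalars ℤ (Ideal.span ({b} : Set O)) with hLdef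
  have hmem : ∀ x : O, (LinearMap.mulLeft ℤ b) x ∈ L :=
    fun x => Ideal.mem_span_singleton'.mpr ⟨x, mul_comm x b⟩
  set g : O →ₗ[ℤ] L := LinearMap.codRestrict L (LinearMap.mulLeft ℤ b) hmem with hgdef
  set f : L →ₗ[ℤ] L := g.comp L.subtype with hfdef
  -- trace equality
  have htr : trform b = LinearMap.trace ℤ L f := by
    rw [trform, ← LinearMap.subtype_comp_codRestrict (LinearMap.mulLeft ℤ b) L hmem]
    exact LinearMap.trace_comp_comm' g L.subtype
  set ι := Module.Free.ChooseBasisIndex ℤ L with hι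
  set c : Module.Basis ι ℤ L := Module.Free.chooseBasis ℤ L with hc
  set e : ι → O := fun i => (c i : O) with he
  set A : Matrix ι ι ℤ := LinearMap.toMatrix c c f with hA
  have hfc : ∀ j, f (c j) = ∑ i, A i j • c i := by
    intro j
    conv_lhs => rw [← c.sum_repr (f (c j))]
    refine Finset.sum_congr rfl fun i _ => ?_
    rw [hA, LinearMap.toMatrix_apply]
  have hbe : ∀ j, b * e j = ∑ i, A i j • e i := by
    intro j
    have h1 : (f (c j) : O) = b * e j := rfl
    rw [← h1, hfc j]
    push_cast
    rfl
  set G : Matrix ι ι ℤ := Matrix.of (fun i j => trform (e i * σ (e j))) with hG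
  -- quadratic form identity
  have hquad : ∀ w v : ι → ℤ,
      w ⬝ᵥ G.mulVec v = trform ((∑ i, w i • e i) * σ (∑ j, v j • e j)) := by
    intro w v
    have hs : σ (∑ j, v j • e j) = ∑ j, v j • σ (e j) := by
      rw [map_sum]
      exact Finset.sum_congr rfl fun j _ => map_zsmul σ _ _
    rw [hs, trf_sum_left]
    have : ∀ i, trform (e i * ∑ j, v j • σ (e j)) = ∑ j, v j * trform (e i * σ (e j)) :=
      fun i => trf_sum_right v (fun j => σ (e j)) (e i)
    simp only [this]
    simp only [dotProduct, Matrix.mulVec, hG, Matrix.of_apply, Finset.mul_sum]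
    refine Finset.sum_congr rfl fun i _ => Finset.sum_congr rfl fun j _ => ?_
    ring
  -- symmetric G
  have hGsym : Gᵀ = G := by
    ext i j
    show trform (e j * σ (e i)) = trform (e i * σ (e j))
    calc trform (e j * σ (e i)) = trform (σ (e j * σ (e i))) := (trform_sigma σ _).symm
      _ = trform (e i * σ (e j)) := by rw [_root_.map_mul, hσ]; congr 1; ring
  -- self-adjointness
  have hAG : Aᵀ * G = G * A := by
    ext i j
    rw [Matrix.mul_apply, Matrix.mul_apply]
    have hL : ∑ k, Aᵀ i k * G k j = trform ((b * e i) * σ (e j)) := by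
      rw [hbe i, trf_sum_left]
      exact Finset.sum_congr rfl fun k _ => rfl
    have hR : ∑ k, G i k * A k j = trform ((b * e i) * σ (e j)) := by
      have hs : σ (b * e j) = ∑ k, A k j • σ (e k) := by
        rw [hbe j, map_sum]
        exact Finset.sum_congr rfl fun k _ => map_zsmul σ _ _
      have h1 : trform (e i * σ (b * e j)) = ∑ k, A k j * trform (e i * σ (e k)) := by
        rw [hs]; exact trf_sum_right (fun k => A k j) (fun k => σ (e k)) (e i)
      have h2 : trform (e i * σ (b * e j)) = trform ((b * e i) * σ (e j)) := by
        rw [_root_.map_mul, hσb]; congr 1; ring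
      rw [← h2, h1]
      exact Finset.sum_congr rfl fun k _ => by simp only [hG, Matrix.of_apply]; ring
    rw [hL, hR]
  -- positivity of G
  have hsumne : ∀ w : ι → ℤ, w ≠ 0 → (∑ i, w i • e i) ≠ 0 := by
    intro w hw h0
    apply hw
    have hsum : (∑ i, w i • c i : L) = 0 := by
      have : ((∑ i, w i • c i : L) : O) = ∑ i, w i • e i := by push_cast; rfl
      rwa [← ZeroMemClass.coe_eq_zero, this]
    funext i
    exact Fintype.linearIndependent_iff.mp c.linearIndependent w hsum i
  have hGpos : ∀ w : ι → ℤ, w ≠ 0 → 0 < w ⬝ᵥ G.mulVec w := by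
    intro w hw
    rw [hquad w w]
    exact hpos _ (hsumne w hw)
  have hGnn : ∀ w : ι → ℤ, 0 ≤ w ⬝ᵥ G.mulVec w := by
    intro w
    rcases eq_or_ne w 0 with h | h
    · subst h; simp
    · exact le_of_lt (hGpos w h)
  have hGdet : G.det ≠ 0 := by
    intro h0
    obtain ⟨w, hw, hGw⟩ := Matrix.exists_mulVec_eq_zero_iff.mpr h0
    have := hGpos w hw
    rw [hGw] at this
    simp at this
  -- b * (sum) identity
  have hbxw : ∀ w : ι → ℤ, ∑ i, (A.mulVec w) i • e i = b * ∑ j, w j • e j := by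
    intro w
    calc ∑ i, (∑ j, A i j * w j) • e i = ∑ i, ∑ j, (A i j * w j) • e i := by
          refine Finset.sum_congr rfl fun i _ => ?_; rw [Finset.sum_smul]
      _ = ∑ j, ∑ i, (A i j * w j) • e i := Finset.sum_comm
      _ = ∑ j, w j • (∑ i, A i j • e i) := by
          refine Finset.sum_congr rfl fun j _ => ?_
          rw [Finset.smul_sum]
          refine Finset.sum_congr rfl fun i _ => ?_
          rw [smul_smul, mul_comm]
      _ = ∑ j, w j • (b * e j) := by
          refine Finset.sum_congr rfl fun j _ => ?_; rw [hbe j]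
      _ = b * ∑ j, w j • e j := by
          rw [Finset.mul_sum]
          exact Finset.sum_congr rfl fun j _ => (mul_smul_comm _ _ _).symm
  -- positivity of G * A
  have hGAnn : ∀ w : ι → ℤ, 0 ≤ w ⬝ᵥ (G * A).mulVec w := by
    intro w
    rw [← Matrix.mulVec_mulVec, hquad w (A.mulVec w), hbxw]
    set x : O := ∑ j, w j • e j with hx
    have hx2 : x * σ (b * x) = (a * x) * σ (a * x) := by
      rw [_root_.map_mul, hσb, _root_.map_mul, hbdef]; ring
    rw [hx2]
    rcases eq_or_ne (a * x) 0 with h | h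
    · rw [h, zero_mul, trform_zero]
    · exact le_of_lt (hpos _ h)
  -- injectivity / nonzero determinant of A
  have hdetA : A.det ≠ 0 := by
    intro h0
    obtain ⟨w, hw, hAw⟩ := Matrix.exists_mulVec_eq_zero_iff.mpr h0
    set x : L := ∑ i, w i • c i with hx
    have hrepr : ⇑(c.repr x) = w := c.repr_sum_self w
    have hfx : f x = 0 := by
      have h1 := LinearMap.toMatrix_mulVec_repr c c f x
      rw [hrepr] at h1
      rw [← hA] at h1
      rw [hAw] at h1
      have h2 : c.repr (f x) = 0 := DFunLike.coe_injective h1.symm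
      exact c.repr.map_eq_zero_iff.mp h2
    have hxO : b * (x : O) = 0 := by
      have : (f x : O) = b * (x : O) := rfl
      rw [hfx] at this
      exact this.symm
    have hxne : ((x : O)) ≠ 0 := by
      intro h
      apply hw
      have hx0 : x = 0 := ZeroMemClass.coe_eq_zero.mp h
      rw [hx0] at hrepr
      rw [← hrepr]
      simp
    obtain ⟨y, hy⟩ := Ideal.mem_span_singleton'.mp x.2
    have hxx : (x : O) * σ (x : O) = y * (b * σ (x : O)) := by rw [← hy]; ring
    have hbσ : b * σ ((x : O)) = 0 := by
      have h3 := congrArg σ hxO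
      rw [_root_.map_mul, hσb, map_zero] at h3
      exact h3
    have h0' : trform ((x : O) * σ (x : O)) = 0 := by
      rw [hxx, hbσ, mul_zero, trform_zero]
    exact absurd h0' (ne_of_gt (hpos _ hxne))
  -- pass to ℝ
  set Ar : Matrix ι ι ℝ := A.map (Int.cast : ℤ → ℝ) with hAr
  set Gr : Matrix ι ι ℝ := G.map (Int.cast : ℤ → ℝ) with hGr
  have hGAsym : (G * A)ᵀ = G * A := by rw [Matrix.transpose_mul, hGsym, hAG]
  have hPr : ((G * A).map (Int.cast : ℤ → ℝ)).PosSemidef := int_psd_real _ hGAsym hGAnn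
  have hGrpsd : Gr.PosSemidef := int_psd_real G hGsym hGnn
  have hGrdet : Gr.det ≠ 0 := by
    rw [hGr]
    have : (G.map (Int.cast : ℤ → ℝ)).det = ((G.det : ℤ) : ℝ) :=
      ((Int.castRingHom ℝ).map_det G).symm
    rw [this]
    exact_mod_cast hGdet
  set R : Matrix ι ι ℝ := (open scoped MatrixOrder in CFC.sqrt Gr) with hR
  have hRpsd : R.PosSemidef :=
    open scoped MatrixOrder in Matrix.nonneg_iff_posSemidef.mp (CFC.sqrt_nonneg Gr)
  have hRsym : Rᵀ = R := by
    rw [← conjTranspose_eq_transpose_of_trivial]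
    exact hRpsd.1
  have hRR : R * R = Gr :=
    open scoped MatrixOrder in CFC.sqrt_mul_sqrt_self Gr (Matrix.nonneg_iff_posSemidef.mpr hGrpsd)
  have hRdet : R.det ≠ 0 := by
    intro h
    apply hGrdet
    rw [← hRR, Matrix.det_mul, h, mul_zero]
  have hRunit : IsUnit R.det := isUnit_iff_ne_zero.mpr hRdet
  have hRRinv : R * R⁻¹ = 1 := Matrix.mul_nonsing_inv R hRunit
  have hRinvR : R⁻¹ * R = 1 := Matrix.nonsing_inv_mul R hRunit
  have hRinvsym : R⁻¹ᵀ = R⁻¹ := by rw [Matrix.transpose_nonsing_inv, hRsym]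
  set S : Matrix ι ι ℝ := R * Ar * R⁻¹ with hS
  have hSeq : S = R⁻¹ᴴ * ((G * A).map (Int.cast : ℤ → ℝ)) * R⁻¹ := by
    rw [conjTranspose_eq_transpose_of_trivial, hRinvsym]
    have hmap : (G * A).map (Int.cast : ℤ → ℝ) = Gr * Ar := by
      rw [hGr, hAr]
      exact Matrix.map_mul (f := Int.castRingHom ℝ)
    rw [hmap, ← hRR, hS]
    calc R * Ar * R⁻¹ = (R⁻¹ * R) * (R * Ar * R⁻¹) := by rw [hRinvR, one_mul]
      _ = R⁻¹ * (R * R * Ar) * R⁻¹ := by noncomm_ring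
  have hSpsd : S.PosSemidef := by
    rw [hSeq]
    exact hPr.conjTranspose_mul_mul_same R⁻¹
  have hSherm : S.IsHermitian := hSpsd.1
  set μ : ι → ℝ := hSherm.eigenvalues with hμ
  have hμnn : ∀ i, 0 ≤ μ i := hSpsd.eigenvalues_nonneg
  -- trace and det identities
  have htrS : S.trace = ((A.trace : ℤ) : ℝ) := by
    have h1 : S.trace = Ar.trace := by
      rw [hS]
      rw [Matrix.trace_mul_comm (R * Ar) R⁻¹, ← Matrix.mul_assoc, hRinvR, one_mul]
    rw [h1, hAr]
    simp [Matrix.trace, Matrix.diag, Matrix.map_apply]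
  have hdetS : S.det = ((A.det : ℤ) : ℝ) := by
    rw [hS, Matrix.det_mul, Matrix.det_mul, Matrix.det_nonsing_inv, Ring.inverse_eq_inv']
    have hAdet : Ar.det = ((A.det : ℤ) : ℝ) := ((Int.castRingHom ℝ).map_det A).symm
    rw [hAdet]
    field_simp [hRdet]
  have htrSum : ∑ i, μ i = S.trace := by
    have h1 : star (hSherm.eigenvectorUnitary : Matrix ι ι ℝ) * S * (hSherm.eigenvectorUnitary : Matrix ι ι ℝ) = Matrix.diagonal (RCLike.ofReal ∘ hSherm.eigenvalues) := by
      have := hSherm.conjStarAlgAut_star_eigenvectorUnitary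
      simpa [Unitary.conjStarAlgAut_apply] using this
    have h2 := congrArg Matrix.trace h1
    rw [Matrix.trace_mul_cycle] at h2
    rw [← Matrix.mul_assoc] at h2
    have h3 : (hSherm.eigenvectorUnitary : Matrix ι ι ℝ) * star (hSherm.eigenvectorUnitary : Matrix ι ι ℝ) = 1 :=
      Matrix.mem_unitaryGroup_iff.mp hSherm.eigenvectorUnitary.2
    rw [h3, one_mul] at h2
    rw [h2, Matrix.trace_diagonal]
    simp [hμ]
  have hdetProd : ∏ i, μ i = S.det := by
    rw [hSherm.det_eq_prod_eigenvalues]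
    simp [hμ]
  -- 1 ≤ det
  have hprodnn : (0:ℝ) ≤ ∏ i, μ i := Finset.prod_nonneg fun i _ => hμnn i
  have hdetA1 : (1:ℤ) ≤ A.det := by
    have h0 : (0:ℝ) ≤ ((A.det : ℤ) : ℝ) := by rw [← hdetS, ← hdetProd]; exact hprodnn
    have h0' : (0:ℤ) ≤ A.det := by exact_mod_cast h0
    omega
  have hprod1 : (1:ℝ) ≤ ∏ i, μ i := by
    rw [hdetProd, hdetS]
    exact_mod_cast hdetA1
  -- AM-GM
  have hrank : Module.finrank ℤ L = Fintype.card ι :=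
    Module.finrank_eq_card_chooseBasisIndex ℤ L
  rcases isEmpty_or_nonempty ι with hempty | hnonempty
  · -- rank 0 case
    have h1 : Module.finrank ℤ L = 0 := by rw [hrank]; exact Fintype.card_eq_zero
    have h2 : trform b = 0 := by
      rw [htr, LinearMap.trace_eq_matrix_trace ℤ c f, ← hA, Matrix.trace]
      simp
    rw [h1, h2]
    simp
  · have hcard : (0:ℝ) < (Fintype.card ι : ℝ) := by
      have := Fintype.card_pos (α := ι)
      exact_mod_cast this
    have hsum1 : ∑ _i : ι, ((Fintype.card ι : ℝ))⁻¹ = 1 := by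
      rw [Finset.sum_const, nsmul_eq_mul, Finset.card_univ]
      field_simp
    have hgm := Real.geom_mean_le_arith_mean_weighted Finset.univ
      (fun _ => ((Fintype.card ι : ℝ))⁻¹) μ (fun i _ => by positivity) hsum1 (fun i _ => hμnn i)
    rw [Real.finset_prod_rpow Finset.univ μ (fun i _ => hμnn i)] at hgm
    have hlhs : (1:ℝ) ≤ (∏ i, μ i) ^ ((Fintype.card ι : ℝ))⁻¹ := by
      rw [← Real.one_rpow ((Fintype.card ι : ℝ))⁻¹]
      exact Real.rpow_le_rpow zero_le_one hprod1 (by positivity)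
    have hsum : (1:ℝ) ≤ ((Fintype.card ι : ℝ))⁻¹ * ∑ i, μ i := by
      calc (1:ℝ) ≤ (∏ i, μ i) ^ ((Fintype.card ι : ℝ))⁻¹ := hlhs
        _ ≤ ∑ i, ((Fintype.card ι : ℝ))⁻¹ * μ i := hgm
        _ = ((Fintype.card ι : ℝ))⁻¹ * ∑ i, μ i := by rw [Finset.mul_sum]
    have hfinal : (Fintype.card ι : ℝ) ≤ ∑ i, μ i := by
      have := mul_le_mul_of_nonneg_left hsum (le_of_lt hcard)
      rw [mul_one, ← mul_assoc, mul_inv_cancel₀ (ne_of_gt hcard), one_mul] at this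
      exact this
    have htrchain : ((trform b : ℤ) : ℝ) = ∑ i, μ i := by
      rw [htrSum, htrS, htr, LinearMap.trace_eq_matrix_trace ℤ c f, ← hA]
    have : ((Fintype.card ι : ℤ) : ℝ) ≤ ((trform b : ℤ) : ℝ) := by
      rw [htrchain]
      exact_mod_cast hfinal
    have hle : (Fintype.card ι : ℤ) ≤ trform b := by exact_mod_cast this
    rw [hrank]
    exact hle
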